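/- Consistency of the Schwarz–Witten degree-8 form (Remark 1.1): for commuting formal variables (degree-4 classes) p, a, b (representing p₁(TZ), p₁(F₁), p₁(F₂)) and degree-8 classes P, A', B' (representing p₂(TZ), p₂(F₁), p₂(F₂)), when m = n + 32 the degree-8 component of −[(e^{(p−a+b)/24} − 1)/(p−a+b)]·Â·ch(𝔇) + e^{(p−a+b)/24}·Â equals (1/24)·[(−3p² + 4P)/8 − 2a² + 4A' + 2b² − 4B' + (1/2)p(a−b)], where Â = 1 − p/24 + (7p² − 4P)/5760 + …, and ch(𝔇) is the Chern character of 𝔇 = Λ²F₁ + S²F₂ − F₁⊗F₂ + T_ℂZ − 2 expressed in Pontryagin classes with dim F₁ − dim F₂ = 32 and fiber dimension 10. -/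

import Mathlib

open MvPolynomial

namespace SWAux
open MvPolynomial
noncomputable section
set_option maxHeartbeats 1000000
abbrev R6 := MvPolynomial (Fin 6) ℚ
abbrev ww : Fin 6 → ℕ := ![4, 4, 4, 8, 8, 8]

theorem hneg {φ : R6} {m : ℕ} (h : IsWeightedHomogeneous ww φ m) :
    IsWeightedHomogeneous ww (-φ) m := fun d hd => h (by rwa [coeff_neg, neg_ne_zero] at hd)

theorem hpowX (i : Fin 6) (k : ℕ) : IsWeightedHomogeneous ww ((X i : R6) ^ k) (k * ww i) := by
  induction k with
  | zero => rw [pow_zero, Nat.zero_mul]; exact isWeightedHomogeneous_one ℚ ww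
  | succ m ih => rw [pow_succ, Nat.succ_mul]; exact ih.mul (isWeightedHomogeneous_X ℚ ww i)

theorem hom_term (cc : ℚ) (e₀ e₁ e₂ e₃ e₄ e₅ d : ℕ)
    (h : e₀*4 + e₁*4 + e₂*4 + e₃*8 + e₄*8 + e₅*8 = d) :
    IsWeightedHomogeneous ww
      (C cc * X 0 ^ e₀ * X 1 ^ e₁ * X 2 ^ e₂ * X 3 ^ e₃ * X 4 ^ e₄ * X 5 ^ e₅ : R6) d := by
  subst h
  have h0 := ((((((isWeightedHomogeneous_C ww cc).mul (hpowX 0 e₀)).mul (hpowX 1 e₁)).mul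
      (hpowX 2 e₂)).mul (hpowX 3 e₃)).mul (hpowX 4 e₄)).mul (hpowX 5 e₅)
  convert h0 using 2
  all_goals simp [ww]
  try ring

def g0 : R6 := C (1/24 : ℚ) * X 0 ^ 0 * X 1 ^ 0 * X 2 ^ 0 * X 3 ^ 0 * X 4 ^ 0 * X 5 ^ 0
theorem g0_hom : IsWeightedHomogeneous ww g0 0 := by
  unfold g0; exact (hom_term (1/24 : ℚ) 0 0 0 0 0 0 0 (by norm_num))

def g4 : R6 := C (1/1152 : ℚ) * X 0 ^ 0 * X 1 ^ 0 * X 2 ^ 1 * X 3 ^ 0 * X 4 ^ 0 * X 5 ^ 0 + C (-1/1152 : ℚ) * X 0 ^ 0 * X 1 ^ 1 * X 2 ^ 0 * X 3 ^ 0 * X 4 ^ 0 * X 5 ^ 0 + C (1/1152 : ℚ) * X 0 ^ 1 * X 1 ^ 0 * X 2 ^ 0 * X 3 ^ 0 * X 4 ^ 0 * X 5 ^ 0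
theorem g4_hom : IsWeightedHomogeneous ww g4 4 := by
  unfold g4; exact (((hom_term (1/1152 : ℚ) 0 0 1 0 0 0 4 (by norm_num)).add (hom_term (-1/1152 : ℚ) 0 1 0 0 0 0 4 (by norm_num))).add (hom_term (1/1152 : ℚ) 1 0 0 0 0 0 4 (by norm_num)))

def g8 : R6 := C (1/82944 : ℚ) * X 0 ^ 0 * X 1 ^ 0 * X 2 ^ 2 * X 3 ^ 0 * X 4 ^ 0 * X 5 ^ 0 + C (-1/41472 : ℚ) * X 0 ^ 0 * X 1 ^ 1 * X 2 ^ 1 * X 3 ^ 0 * X 4 ^ 0 * X 5 ^ 0 + C (1/82944 : ℚ) * X 0 ^ 0 * X 1 ^ 2 * X 2 ^ 0 * X 3 ^ 0 * X 4 ^ 0 * X 5 ^ 0 + C (1/41472 : ℚ) * X 0 ^ 1 * X 1 ^ 0 * X 2 ^ 1 * X 3 ^ 0 * X 4 ^ 0 * X 5 ^ 0 + C (-1/41472 : ℚ) * X 0 ^ 1 * X 1 ^ 1 * X 2 ^ 0 * X 3 ^ 0 * X 4 ^ 0 * X 5 ^ 0 + C (1/82944 : ℚ) * X 0 ^ 2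 * X 1 ^ 0 * X 2 ^ 0 * X 3 ^ 0 * X 4 ^ 0 * X 5 ^ 0
theorem g8_hom : IsWeightedHomogeneous ww g8 8 := by
  unfold g8; exact ((((((hom_term (1/82944 : ℚ) 0 0 2 0 0 0 8 (by norm_num)).add (hom_term (-1/41472 : ℚ) 0 1 1 0 0 0 8 (by norm_num))).add (hom_term (1/82944 : ℚ) 0 2 0 0 0 0 8 (by norm_num))).add (hom_term (1/41472 : ℚ) 1 0 1 0 0 0 8 (by norm_num))).add (hom_term (-1/41472 : ℚ) 1 1 0 0 0 0 8 (by norm_num))).add (hom_term (1/82944 : ℚ) 2 0 0 0 0 0 8 (by norm_num)))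

def h0 : R6 := C (1 : ℚ) * X 0 ^ 0 * X 1 ^ 0 * X 2 ^ 0 * X 3 ^ 0 * X 4 ^ 0 * X 5 ^ 0
theorem h0_hom : IsWeightedHomogeneous ww h0 0 := by
  unfold h0; exact (hom_term (1 : ℚ) 0 0 0 0 0 0 0 (by norm_num))

def h4 : R6 := C (-1/24 : ℚ) * X 0 ^ 1 * X 1 ^ 0 * X 2 ^ 0 * X 3 ^ 0 * X 4 ^ 0 * X 5 ^ 0
theorem h4_hom : IsWeightedHomogeneous ww h4 4 := by
  unfold h4; exact (hom_term (-1/24 : ℚ) 1 0 0 0 0 0 4 (by norm_num))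

def h8 : R6 := C (-1/1440 : ℚ) * X 0 ^ 0 * X 1 ^ 0 * X 2 ^ 0 * X 3 ^ 1 * X 4 ^ 0 * X 5 ^ 0 + C (7/5760 : ℚ) * X 0 ^ 2 * X 1 ^ 0 * X 2 ^ 0 * X 3 ^ 0 * X 4 ^ 0 * X 5 ^ 0
theorem h8_hom : IsWeightedHomogeneous ww h8 8 := by
  unfold h8; exact ((hom_term (-1/1440 : ℚ) 0 0 0 1 0 0 8 (by norm_num)).add (hom_term (7/5760 : ℚ) 2 0 0 0 0 0 8 (by norm_num)))

def e0 : R6 := C (1 : ℚ) * X 0 ^ 0 * X 1 ^ 0 * X 2 ^ 0 * X 3 ^ 0 * X 4 ^ 0 * X 5 ^ 0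
theorem e0_hom : IsWeightedHomogeneous ww e0 0 := by
  unfold e0; exact (hom_term (1 : ℚ) 0 0 0 0 0 0 0 (by norm_num))

def e4 : R6 := C (1/24 : ℚ) * X 0 ^ 0 * X 1 ^ 0 * X 2 ^ 1 * X 3 ^ 0 * X 4 ^ 0 * X 5 ^ 0 + C (-1/24 : ℚ) * X 0 ^ 0 * X 1 ^ 1 * X 2 ^ 0 * X 3 ^ 0 * X 4 ^ 0 * X 5 ^ 0 + C (1/24 : ℚ) * X 0 ^ 1 * X 1 ^ 0 * X 2 ^ 0 * X 3 ^ 0 * X 4 ^ 0 * X 5 ^ 0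
theorem e4_hom : IsWeightedHomogeneous ww e4 4 := by
  unfold e4; exact (((hom_term (1/24 : ℚ) 0 0 1 0 0 0 4 (by norm_num)).add (hom_term (-1/24 : ℚ) 0 1 0 0 0 0 4 (by norm_num))).add (hom_term (1/24 : ℚ) 1 0 0 0 0 0 4 (by norm_num)))

def e8 : R6 := C (1/1152 : ℚ) * X 0 ^ 0 * X 1 ^ 0 * X 2 ^ 2 * X 3 ^ 0 * X 4 ^ 0 * X 5 ^ 0 + C (-1/576 : ℚ) * X 0 ^ 0 * X 1 ^ 1 * X 2 ^ 1 * X 3 ^ 0 * X 4 ^ 0 * X 5 ^ 0 + C (1/1152 : ℚ) * X 0 ^ 0 * X 1 ^ 2 * X 2 ^ 0 * X 3 ^ 0 * X 4 ^ 0 * X 5 ^ 0 + C (1/576 : ℚ) * X 0 ^ 1 * X 1 ^ 0 * X 2 ^ 1 * X 3 ^ 0 * X 4 ^ 0 * X 5 ^ 0 + C (-1/576 : ℚ) * X 0 ^ 1 * X 1 ^ 1 * X 2 ^ 0 * X 3 ^ 0 * X 4 ^ 0 * X 5 ^ 0 + C (1/1152 : ℚ) * X 0 ^ 2 * X 1 ^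 0 * X 2 ^ 0 * X 3 ^ 0 * X 4 ^ 0 * X 5 ^ 0
theorem e8_hom : IsWeightedHomogeneous ww e8 8 := by
  unfold e8; exact ((((((hom_term (1/1152 : ℚ) 0 0 2 0 0 0 8 (by norm_num)).add (hom_term (-1/576 : ℚ) 0 1 1 0 0 0 8 (by norm_num))).add (hom_term (1/1152 : ℚ) 0 2 0 0 0 0 8 (by norm_num))).add (hom_term (1/576 : ℚ) 1 0 1 0 0 0 8 (by norm_num))).add (hom_term (-1/576 : ℚ) 1 1 0 0 0 0 8 (by norm_num))).add (hom_term (1/1152 : ℚ) 2 0 0 0 0 0 8 (by norm_num)))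

def e12 : R6 := C (1/82944 : ℚ) * X 0 ^ 0 * X 1 ^ 0 * X 2 ^ 3 * X 3 ^ 0 * X 4 ^ 0 * X 5 ^ 0 + C (-1/27648 : ℚ) * X 0 ^ 0 * X 1 ^ 1 * X 2 ^ 2 * X 3 ^ 0 * X 4 ^ 0 * X 5 ^ 0 + C (1/27648 : ℚ) * X 0 ^ 0 * X 1 ^ 2 * X 2 ^ 1 * X 3 ^ 0 * X 4 ^ 0 * X 5 ^ 0 + C (-1/82944 : ℚ) * X 0 ^ 0 * X 1 ^ 3 * X 2 ^ 0 * X 3 ^ 0 * X 4 ^ 0 * X 5 ^ 0 + C (1/27648 : ℚ) * X 0 ^ 1 * X 1 ^ 0 * X 2 ^ 2 * X 3 ^ 0 * X 4 ^ 0 * X 5 ^ 0 + C (-1/13824 : ℚ) * X 0 ^ 1 * X 1 ^ 1 * X 2 ^ 1 * X 3 ^ 0 * X 4 ^ 0 * X 5 ^ 0 + C (1/27648 : ℚ) * X 0 ^ 1 * X 1 ^ 2 * X 2 ^ 0 * X 3 ^ 0 * X 4 ^ 0 * X 5 ^ 0 + C (1/27648 : ℚ) * X 0 ^ 2 * X 1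 ^ 0 * X 2 ^ 1 * X 3 ^ 0 * X 4 ^ 0 * X 5 ^ 0 + C (-1/27648 : ℚ) * X 0 ^ 2 * X 1 ^ 1 * X 2 ^ 0 * X 3 ^ 0 * X 4 ^ 0 * X 5 ^ 0 + C (1/82944 : ℚ) * X 0 ^ 3 * X 1 ^ 0 * X 2 ^ 0 * X 3 ^ 0 * X 4 ^ 0 * X 5 ^ 0
theorem e12_hom : IsWeightedHomogeneous ww e12 12 := by
  unfold e12; exact ((((((((((hom_term (1/82944 : ℚ) 0 0 3 0 0 0 12 (by norm_num)).add (hom_term (-1/27648 : ℚ) 0 1 2 0 0 0 12 (by norm_num))).add (hom_term (1/27648 : ℚ) 0 2 1 0 0 0 12 (by norm_num))).add (hom_term (-1/82944 : ℚ) 0 3 0 0 0 0 12 (by norm_num))).add (hom_term (1/27648 : ℚ) 1 0 2 0 0 0 12 (by norm_num))).add (hom_term (-1/13824 : ℚ) 1 1 1 0 0 0 12 (by norm_num))).add (hom_term (1/27648 : ℚ) 1 2 0 0 0 0 12 (by norm_num))).add (hom_term (1/27648 : ℚ) 2 0 1 0 0 0 12 (by norm_num))).add (hom_term (-1/27648 :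 ℚ) 2 1 0 0 0 0 12 (by norm_num))).add (hom_term (1/82944 : ℚ) 3 0 0 0 0 0 12 (by norm_num)))

def c0 : R6 := C (504 : ℚ) * X 0 ^ 0 * X 1 ^ 0 * X 2 ^ 0 * X 3 ^ 0 * X 4 ^ 0 * X 5 ^ 0
theorem c0_hom : IsWeightedHomogeneous ww c0 0 := by
  unfold c0; exact (hom_term (504 : ℚ) 0 0 0 0 0 0 0 (by norm_num))

def c4 : R6 := C (-30 : ℚ) * X 0 ^ 0 * X 1 ^ 0 * X 2 ^ 1 * X 3 ^ 0 * X 4 ^ 0 * X 5 ^ 0 + C (30 : ℚ) * X 0 ^ 0 * X 1 ^ 1 * X 2 ^ 0 * X 3 ^ 0 * X 4 ^ 0 * X 5 ^ 0 + C (1 : ℚ) * X 0 ^ 1 * X 1 ^ 0 * X 2 ^ 0 * X 3 ^ 0 * X 4 ^ 0 * X 5 ^ 0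
theorem c4_hom : IsWeightedHomogeneous ww c4 4 := by
  unfold c4; exact (((hom_term (-30 : ℚ) 0 0 1 0 0 0 4 (by norm_num)).add (hom_term (30 : ℚ) 0 1 0 0 0 0 4 (by norm_num))).add (hom_term (1 : ℚ) 1 0 0 0 0 0 4 (by norm_num)))

def c8 : R6 := C (4 : ℚ) * X 0 ^ 0 * X 1 ^ 0 * X 2 ^ 0 * X 3 ^ 0 * X 4 ^ 0 * X 5 ^ 1 + C (-4 : ℚ) * X 0 ^ 0 * X 1 ^ 0 * X 2 ^ 0 * X 3 ^ 0 * X 4 ^ 1 * X 5 ^ 0 + C (-1/6 : ℚ) * X 0 ^ 0 * X 1 ^ 0 * X 2 ^ 0 * X 3 ^ 1 * X 4 ^ 0 * X 5 ^ 0 + C (-3/2 : ℚ) * X 0 ^ 0 * X 1 ^ 0 * X 2 ^ 2 * X 3 ^ 0 * X 4 ^ 0 * X 5 ^ 0 + C (-1 : ℚ) * X 0 ^ 0 * X 1 ^ 1 * X 2 ^ 1 * X 3 ^ 0 * X 4 ^ 0 * X 5 ^ 0 + C (5/2 : ℚ) * X 0 ^ 0 * X 1 ^ 2 * X 2 ^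 0 * X 3 ^ 0 * X 4 ^ 0 * X 5 ^ 0 + C (1/12 : ℚ) * X 0 ^ 2 * X 1 ^ 0 * X 2 ^ 0 * X 3 ^ 0 * X 4 ^ 0 * X 5 ^ 0
theorem c8_hom : IsWeightedHomogeneous ww c8 8 := by
  unfold c8; exact (((((((hom_term (4 : ℚ) 0 0 0 0 0 1 8 (by norm_num)).add (hom_term (-4 : ℚ) 0 0 0 0 1 0 8 (by norm_num))).add (hom_term (-1/6 : ℚ) 0 0 0 1 0 0 8 (by norm_num))).add (hom_term (-3/2 : ℚ) 0 0 2 0 0 0 8 (by norm_num))).add (hom_term (-1 : ℚ) 0 1 1 0 0 0 8 (by norm_num))).add (hom_term (5/2 : ℚ) 0 2 0 0 0 0 8 (by norm_num))).add (hom_term (1/12 : ℚ) 2 0 0 0 0 0 8 (by norm_num)))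

def c12 : R6 := C (-1/6 : ℚ) * X 0 ^ 0 * X 1 ^ 0 * X 2 ^ 1 * X 3 ^ 0 * X 4 ^ 0 * X 5 ^ 1 + C (1/6 : ℚ) * X 0 ^ 0 * X 1 ^ 0 * X 2 ^ 1 * X 3 ^ 0 * X 4 ^ 1 * X 5 ^ 0 + C (1/12 : ℚ) * X 0 ^ 0 * X 1 ^ 0 * X 2 ^ 3 * X 3 ^ 0 * X 4 ^ 0 * X 5 ^ 0 + C (1/6 : ℚ) * X 0 ^ 0 * X 1 ^ 1 * X 2 ^ 0 * X 3 ^ 0 * X 4 ^ 0 * X 5 ^ 1 + C (-1/6 : ℚ) * X 0 ^ 0 * X 1 ^ 1 * X 2 ^ 0 * X 3 ^ 0 * X 4 ^ 1 * X 5 ^ 0 + C (-1/12 : ℚ) * X 0 ^ 0 * X 1 ^ 1 * X 2 ^ 2 * X 3 ^ 0 * X 4 ^ 0 * X 5 ^ 0 + C (-1/12 : ℚ) * X 0 ^ 0 * X 1 ^ 2 * X 2 ^ 1 * X 3 ^ 0 * X 4 ^ 0 * X 5 ^ 0 + C (1/12 : ℚ) * X 0 ^ 0 * X 1 ^ 3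 * X 2 ^ 0 * X 3 ^ 0 * X 4 ^ 0 * X 5 ^ 0
theorem c12_hom : IsWeightedHomogeneous ww c12 12 := by
  unfold c12; exact ((((((((hom_term (-1/6 : ℚ) 0 0 1 0 0 1 12 (by norm_num)).add (hom_term (1/6 : ℚ) 0 0 1 0 1 0 12 (by norm_num))).add (hom_term (1/12 : ℚ) 0 0 3 0 0 0 12 (by norm_num))).add (hom_term (1/6 : ℚ) 0 1 0 0 0 1 12 (by norm_num))).add (hom_term (-1/6 : ℚ) 0 1 0 0 1 0 12 (by norm_num))).add (hom_term (-1/12 : ℚ) 0 1 2 0 0 0 12 (by norm_num))).add (hom_term (-1/12 : ℚ) 0 2 1 0 0 0 12 (by norm_num))).add (hom_term (1/12 : ℚ) 0 3 0 0 0 0 12 (by norm_num)))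

def c16 : R6 := C (1/72 : ℚ) * X 0 ^ 0 * X 1 ^ 0 * X 2 ^ 0 * X 3 ^ 0 * X 4 ^ 0 * X 5 ^ 2 + C (-1/36 : ℚ) * X 0 ^ 0 * X 1 ^ 0 * X 2 ^ 0 * X 3 ^ 0 * X 4 ^ 1 * X 5 ^ 1 + C (1/72 : ℚ) * X 0 ^ 0 * X 1 ^ 0 * X 2 ^ 0 * X 3 ^ 0 * X 4 ^ 2 * X 5 ^ 0 + C (-1/72 : ℚ) * X 0 ^ 0 * X 1 ^ 0 * X 2 ^ 2 * X 3 ^ 0 * X 4 ^ 0 * X 5 ^ 1 + C (1/72 : ℚ) * X 0 ^ 0 * X 1 ^ 0 * X 2 ^ 2 * X 3 ^ 0 * X 4 ^ 1 * X 5 ^ 0 + C (1/288 : ℚ) * X 0 ^ 0 * X 1 ^ 0 * X 2 ^ 4 * X 3 ^ 0 * X 4 ^ 0 * X 5 ^ 0 + C (1/72 : ℚ) * X 0 ^ 0 * X 1 ^ 2 * X 2 ^ 0 * X 3 ^ 0 * X 4 ^ 0 * X 5 ^ 1 + C (-1/72 : ℚ) * X 0 ^ 0 * X 1 ^ 2 *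 X 2 ^ 0 * X 3 ^ 0 * X 4 ^ 1 * X 5 ^ 0 + C (-1/144 : ℚ) * X 0 ^ 0 * X 1 ^ 2 * X 2 ^ 2 * X 3 ^ 0 * X 4 ^ 0 * X 5 ^ 0 + C (1/288 : ℚ) * X 0 ^ 0 * X 1 ^ 4 * X 2 ^ 0 * X 3 ^ 0 * X 4 ^ 0 * X 5 ^ 0
theorem c16_hom : IsWeightedHomogeneous ww c16 16 := by
  unfold c16; exact ((((((((((hom_term (1/72 : ℚ) 0 0 0 0 0 2 16 (by norm_num)).add (hom_term (-1/36 : ℚ) 0 0 0 0 1 1 16 (by norm_num))).add (hom_term (1/72 : ℚ) 0 0 0 0 2 0 16 (by norm_num))).add (hom_term (-1/72 : ℚ) 0 0 2 0 0 1 16 (by norm_num))).add (hom_term (1/72 : ℚ) 0 0 2 0 1 0 16 (by norm_num))).add (hom_term (1/288 : ℚ) 0 0 4 0 0 0 16 (by norm_num))).add (hom_term (1/72 : ℚ) 0 2 0 0 0 1 16 (by norm_num))).add (hom_term (-1/72 : ℚ) 0 2 0 0 1 0 16 (by norm_num))).add (hom_term (-1/144 : ℚ) 0 2 2 0 0 0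 16 (by norm_num))).add (hom_term (1/288 : ℚ) 0 4 0 0 0 0 16 (by norm_num)))

def D0 : R6 := -(g0 * h0 * c0) + (e0 * h0)
theorem D0_hom : IsWeightedHomogeneous ww D0 0 := by
  unfold D0
  exact (hneg ((g0_hom.mul h0_hom).mul c0_hom)).add (e0_hom.mul h0_hom)

def D4 : R6 := -(g0 * h0 * c4 + g0 * h4 * c0 + g4 * h0 * c0) + (e0 * h4 + e4 * h0)
theorem D4_hom : IsWeightedHomogeneous ww D4 4 := by
  unfold D4
  exact (hneg ((((g0_hom.mul h0_hom).mul c4_hom).add ((g0_hom.mul h4_hom).mul c0_hom)).add ((g4_hom.mul h0_hom).mul c0_hom))).add ((e0_hom.mul h4_hom).add (e4_hom.mul h0_hom))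

def D8 : R6 := -(g0 * h0 * c8 + g0 * h4 * c4 + g0 * h8 * c0 + g4 * h0 * c4 + g4 * h4 * c0 + g8 * h0 * c0) + (e0 * h8 + e4 * h4 + e8 * h0)
theorem D8_hom : IsWeightedHomogeneous ww D8 8 := by
  unfold D8
  exact (hneg (((((((g0_hom.mul h0_hom).mul c8_hom).add ((g0_hom.mul h4_hom).mul c4_hom)).add ((g0_hom.mul h8_hom).mul c0_hom)).add ((g4_hom.mul h0_hom).mul c4_hom)).add ((g4_hom.mul h4_hom).mul c0_hom)).add ((g8_hom.mul h0_hom).mul c0_hom))).add (((e0_hom.mul h8_hom).add (e4_hom.mul h4_hom)).add (e8_hom.mul h0_hom))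

def D12 : R6 := -(g0 * h0 * c12 + g0 * h4 * c8 + g0 * h8 * c4 + g4 * h0 * c8 + g4 * h4 * c4 + g4 * h8 * c0 + g8 * h0 * c4 + g8 * h4 * c0) + (e4 * h8 + e8 * h4 + e12 * h0)
theorem D12_hom : IsWeightedHomogeneous ww D12 12 := by
  unfold D12
  exact (hneg (((((((((g0_hom.mul h0_hom).mul c12_hom).add ((g0_hom.mul h4_hom).mul c8_hom)).add ((g0_hom.mul h8_hom).mul c4_hom)).add ((g4_hom.mul h0_hom).mul c8_hom)).add ((g4_hom.mul h4_hom).mul c4_hom)).add ((g4_hom.mul h8_hom).mul c0_hom)).add ((g8_hom.mul h0_hom).mul c4_hom)).add ((g8_hom.mul h4_hom).mul c0_hom))).add (((e4_hom.mul h8_hom).add (e8_hom.mul h4_hom)).add (e12_hom.mul h0_hom))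

def D16 : R6 := -(g0 * h0 * c16 + g0 * h4 * c12 + g0 * h8 * c8 + g4 * h0 * c12 + g4 * h4 * c8 + g4 * h8 * c4 + g8 * h0 * c8 + g8 * h4 * c4 + g8 * h8 * c0) + (e8 * h8 + e12 * h4)
theorem D16_hom : IsWeightedHomogeneous ww D16 16 := by
  unfold D16
  exact (hneg ((((((((((g0_hom.mul h0_hom).mul c16_hom).add ((g0_hom.mul h4_hom).mul c12_hom)).add ((g0_hom.mul h8_hom).mul c8_hom)).add ((g4_hom.mul h0_hom).mul c12_hom)).add ((g4_hom.mul h4_hom).mul c8_hom)).add ((g4_hom.mul h8_hom).mul c4_hom)).add ((g8_hom.mul h0_hom).mul c8_hom)).add ((g8_hom.mul h4_hom).mul c4_hom)).add ((g8_hom.mul h8_hom).mul c0_hom))).add ((e8_hom.mul h8_hom).add (e12_hom.mul h4_hom))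

def D20 : R6 := -(g0 * h4 * c16 + g0 * h8 * c12 + g4 * h0 * c16 + g4 * h4 * c12 + g4 * h8 * c8 + g8 * h0 * c12 + g8 * h4 * c8 + g8 * h8 * c4) + (e12 * h8)
theorem D20_hom : IsWeightedHomogeneous ww D20 20 := by
  unfold D20
  exact (hneg (((((((((g0_hom.mul h4_hom).mul c16_hom).add ((g0_hom.mul h8_hom).mul c12_hom)).add ((g4_hom.mul h0_hom).mul c16_hom)).add ((g4_hom.mul h4_hom).mul c12_hom)).add ((g4_hom.mul h8_hom).mul c8_hom)).add ((g8_hom.mul h0_hom).mul c12_hom)).add ((g8_hom.mul h4_hom).mul c8_hom)).add ((g8_hom.mul h8_hom).mul c4_hom))).add (e12_hom.mul h8_hom)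

def D24 : R6 := -(g0 * h8 * c16 + g4 * h4 * c16 + g4 * h8 * c12 + g8 * h0 * c16 + g8 * h4 * c12 + g8 * h8 * c8)
theorem D24_hom : IsWeightedHomogeneous ww D24 24 := by
  unfold D24
  exact hneg (((((((g0_hom.mul h8_hom).mul c16_hom).add ((g4_hom.mul h4_hom).mul c16_hom)).add ((g4_hom.mul h8_hom).mul c12_hom)).add ((g8_hom.mul h0_hom).mul c16_hom)).add ((g8_hom.mul h4_hom).mul c12_hom)).add ((g8_hom.mul h8_hom).mul c8_hom))

def D28 : R6 := -(g4 * h8 * c16 + g8 * h4 * c16 + g8 * h8 * c12)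
theorem D28_hom : IsWeightedHomogeneous ww D28 28 := by
  unfold D28
  exact hneg ((((g4_hom.mul h8_hom).mul c16_hom).add ((g8_hom.mul h4_hom).mul c16_hom)).add ((g8_hom.mul h8_hom).mul c12_hom))

def D32 : R6 := -(g8 * h8 * c16)
theorem D32_hom : IsWeightedHomogeneous ww D32 32 := by
  unfold D32
  exact hneg ((g8_hom.mul h8_hom).mul c16_hom)

end
end SWAux

set_option maxHeartbeats 4000000

/-- Consistency of the Schwarz–Witten degree-8 form (Remark 1.1).  Work in the
polynomial ring `ℚ[p, a, b, P, A', B']` graded by the weights `(4,4,4,8,8,8)`,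
where `p, a, b` stand for `p₁(TZ), p₁(F₁), p₁(F₂)` and `P, A', B'` for
`p₂(TZ), p₂(F₁), p₂(F₂)`.  With `m = n + 32`,
`Â = 1 − p/24 + (7p² − 4P)/5760`, `ch(T_ℂZ) = 10 + p + (p²−2P)/12`,
`ch(F₁) = m + a + (a²−2A')/12`, `ch(F₁)[2] = m + 4a + 4(a²−2A')/3` (similarly for `F₂`),
`ch(Λ²F₁) = (ch(F₁)² − ch(F₁)[2])/2`, `ch(S²F₂) = (ch(F₂)² + ch(F₂)[2])/2`,
`ch(𝔇) = ch(Λ²F₁) + ch(S²F₂) − ch(F₁)ch(F₂) + ch(T_ℂZ) − 2`,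
`e^{(p−a+b)/24} = ∑_{k≤3} ((p−a+b)/24)^k/k!` and
`g = (e^{(p−a+b)/24} − 1)/(p−a+b) = 1/24 + (p−a+b)/1152 + (p−a+b)²/82944`,
the weight-8 component of `−g·Â·ch(𝔇) + e^{(p−a+b)/24}·Â` equals
`(1/24)[(−3p²+4P)/8 − 2a² + 4A' + 2b² − 4B' + (1/2)p(a−b)]`. -/
theorem schwarz_witten_degree8_form (n : ℕ) :
    let w : Fin 6 → ℕ := ![4, 4, 4, 8, 8, 8]
    let p : MvPolynomial (Fin 6) ℚ := X 0
    let a : MvPolynomial (Fin 6) ℚ := X 1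
    let b : MvPolynomial (Fin 6) ℚ := X 2
    let P2 : MvPolynomial (Fin 6) ℚ := X 3
    let A2 : MvPolynomial (Fin 6) ℚ := X 4
    let B2 : MvPolynomial (Fin 6) ℚ := X 5
    let Ahat := 1 - C (1/24 : ℚ) * p + C (1/5760 : ℚ) * (7 * p ^ 2 - 4 * P2)
    let chT := C (10 : ℚ) + p + C (1/12 : ℚ) * (p ^ 2 - 2 * P2)
    let chF1 := C ((n : ℚ) + 32) + a + C (1/12 : ℚ) * (a ^ 2 - 2 * A2)
    let chF1sq := C ((n : ℚ) + 32) + 4 * a + C (4/3 : ℚ) * (a ^ 2 - 2 * A2)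
    let chF2 := C (n : ℚ) + b + C (1/12 : ℚ) * (b ^ 2 - 2 * B2)
    let chF2sq := C (n : ℚ) + 4 * b + C (4/3 : ℚ) * (b ^ 2 - 2 * B2)
    let chLam2F1 := C (1/2 : ℚ) * (chF1 ^ 2 - chF1sq)
    let chS2F2 := C (1/2 : ℚ) * (chF2 ^ 2 + chF2sq)
    let chD := chLam2F1 + chS2F2 - chF1 * chF2 + chT - 2
    let w0 := p - a + b
    let Eexp := 1 + C (1/24 : ℚ) * w0 + C (1/1152 : ℚ) * w0 ^ 2 + C (1/82944 : ℚ) * w0 ^ 3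
    let g := C (1/24 : ℚ) + C (1/1152 : ℚ) * w0 + C (1/82944 : ℚ) * w0 ^ 2
    weightedHomogeneousComponent w 8 (-(g * Ahat * chD) + Eexp * Ahat)
      = C (1/24 : ℚ) *
          (C (1/8 : ℚ) * (-3 * p ^ 2 + 4 * P2) - 2 * a ^ 2 + 4 * A2 + 2 * b ^ 2 - 4 * B2
            + C (1/2 : ℚ) * p * (a - b)) := by
  intro w p a b P2 A2 B2 Ahat chT chF1 chF1sq chF2 chF2sq chLam2F1 chS2F2 chD w0 Eexp g
  have hw : w = SWAux.ww := rfl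
  have hg : g = SWAux.g0 + SWAux.g4 + SWAux.g8 := by
    simp only [g, w0, p, a, b, SWAux.g0, SWAux.g4, SWAux.g8]
    apply MvPolynomial.funext
    intro x
    simp only [map_add, map_sub, map_mul, map_neg, map_pow, map_one, map_ofNat, eval_C, eval_X,
      map_natCast]
    ring
  have hh : Ahat = SWAux.h0 + SWAux.h4 + SWAux.h8 := by
    simp only [Ahat, p, P2, SWAux.h0, SWAux.h4, SWAux.h8]
    apply MvPolynomial.funext
    intro x
    simp only [map_add, map_sub, map_mul, map_neg, map_pow, map_one, map_ofNat, eval_C, eval_X,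
      map_natCast]
    ring
  have he : Eexp = SWAux.e0 + SWAux.e4 + SWAux.e8 + SWAux.e12 := by
    simp only [Eexp, w0, p, a, b, SWAux.e0, SWAux.e4, SWAux.e8, SWAux.e12]
    apply MvPolynomial.funext
    intro x
    simp only [map_add, map_sub, map_mul, map_neg, map_pow, map_one, map_ofNat, eval_C, eval_X,
      map_natCast]
    ring
  have hc : chD = SWAux.c0 + SWAux.c4 + SWAux.c8 + SWAux.c12 + SWAux.c16 := by
    simp only [chD, chLam2F1, chS2F2, chF1, chF1sq, chF2, chF2sq, chT, p, a, b, P2, A2, B2,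
      SWAux.c0, SWAux.c4, SWAux.c8, SWAux.c12, SWAux.c16, map_add]
    apply MvPolynomial.funext
    intro x
    simp only [map_add, map_sub, map_mul, map_neg, map_pow, map_one, map_ofNat, eval_C, eval_X,
      map_natCast]
    ring
  have hD : -(g * Ahat * chD) + Eexp * Ahat
      = SWAux.D0 + SWAux.D4 + SWAux.D8 + SWAux.D12 + SWAux.D16 + SWAux.D20 + SWAux.D24
        + SWAux.D28 + SWAux.D32 := by
    rw [hg, hh, he, hc]
    unfold SWAux.D0 SWAux.D4 SWAux.D8 SWAux.D12 SWAux.D16 SWAux.D20 SWAux.D24 SWAux.D28 SWAux.D32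
    ring
  rw [hD, hw]
  simp only [map_add]
  rw [SWAux.D0_hom.weightedHomogeneousComponent_ne 8 (by norm_num),
    SWAux.D4_hom.weightedHomogeneousComponent_ne 8 (by norm_num),
    SWAux.D8_hom.weightedHomogeneousComponent_same,
    SWAux.D12_hom.weightedHomogeneousComponent_ne 8 (by norm_num),
    SWAux.D16_hom.weightedHomogeneousComponent_ne 8 (by norm_num),
    SWAux.D20_hom.weightedHomogeneousComponent_ne 8 (by norm_num),
    SWAux.D24_hom.weightedHomogeneousComponent_ne 8 (by norm_num),
    SWAux.D28_hom.weightedHomogeneousComponent_ne 8 (by norm_num),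
    SWAux.D32_hom.weightedHomogeneousComponent_ne 8 (by norm_num)]
  simp only [p, a, b, P2, A2, B2, zero_add, add_zero]
  unfold SWAux.D8 SWAux.g0 SWAux.g4 SWAux.g8 SWAux.h0 SWAux.h4 SWAux.h8 SWAux.e0 SWAux.e4
    SWAux.e8 SWAux.c0 SWAux.c4 SWAux.c8
  apply MvPolynomial.funext
  intro x
  simp only [map_add, map_sub, map_mul, map_neg, map_pow, map_one, map_ofNat, eval_C, eval_X,
    map_natCast]
  ring
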